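/- Let K ∈ ℕ and x, x' ∈ ℝ≥0 with x ≡^K x'. Then τ_{x→x'} : 𝕋 → 𝕋 is a bijection and its inverse is exactly τ_{x'→x}. -/

import Mathlib

open scoped NNReal Classical

namespace IRTA

/-- A timestamp is a finite sequence of non-negative reals. -/
abbrev Timestamp : Type := List ℝ≥0

/-- A timed word is a finite sequence of (delay, letter) pairs. -/
abbrev TimedWord (A : Type) : Type := List (ℝ≥0 × A)

/-- Fractional part of a non-negative real. -/
noncomputable def fracPart (x : ℝ≥0) : ℝ≥0 := x - (⌊x⌋₊ : ℝ≥0)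

/-- `x` is a natural-number value. -/
def IsNatVal (x : ℝ≥0) : Prop := ∃ m : ℕ, x = (m : ℝ≥0)

/-- Region equivalence `≡^K`. -/
def RegEq (K : ℕ) (x y : ℝ≥0) : Prop :=
  (⌊x⌋₊ = ⌊y⌋₊ ∧ (fracPart x = 0 ↔ fracPart y = 0)) ∨ ((K : ℝ≥0) < x ∧ (K : ℝ≥0) < y)

/-- One step of the (greedy) clock evolution: reset whenever the value is an
integer between `0` and `K`. -/
noncomputable def resetStep (K : ℕ) (v : ℝ≥0) : ℝ≥0 :=
  if ∃ m : ℕ, m ≤ K ∧ v = (m : ℝ≥0) then 0 else v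

/-- Auxiliary function computing `c^K` with accumulator `v`. -/
noncomputable def cKAux (K : ℕ) : ℝ≥0 → Timestamp → ℝ≥0
  | v, [] => v
  | v, t :: d => cKAux K (resetStep K (v + t)) d

/-- `c^K(d)`: the sum of the delays after the last integral position of `d`. -/
noncomputable def cK (K : ℕ) (d : Timestamp) : ℝ≥0 := cKAux K 0 d

/-- `c^K` of a timed word is `c^K` of its timestamp. -/
noncomputable def cKW {A : Type} (K : ℕ) (w : TimedWord A) : ℝ≥0 :=
  cK K (w.map Prod.fst)

/-- `c^K_⊤` : `c^K` truncated at `K`. -/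
noncomputable def cKTop {A : Type} (K : ℕ) (w : TimedWord A) : WithTop ℝ≥0 :=
  if cKW K w ≤ (K : ℝ≥0) then ((cKW K w : ℝ≥0) : WithTop ℝ≥0) else ⊤

/-! ### Clock constraints and one-clock timed automata -/

/-- Clock constraints `φ ::= x < m | m < x | x = m | φ ∧ φ`. -/
inductive CC : Type where
  | lt : ℕ → CC
  | gt : ℕ → CC
  | eq : ℕ → CC
  | and : CC → CC → CC

/-- Satisfaction of a clock constraint by a clock value. -/
def CC.sat : CC → ℝ≥0 → Prop
  | .lt m, x => x < (m : ℝ≥0)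
  | .gt m, x => (m : ℝ≥0) < x
  | .eq m, x => x = (m : ℝ≥0)
  | .and φ ψ, x => φ.sat x ∧ ψ.sat x

/-- The largest constant appearing in a clock constraint. -/
def CC.maxConst : CC → ℕ
  | .lt m => m
  | .gt m => m
  | .eq m => m
  | .and φ ψ => max φ.maxConst ψ.maxConst

/-- A transition of a one-clock timed automaton; `reset = true` means the
clock is reset (the `r = 0` case). -/
structure TTrans (Q A : Type) where
  src : Q
  dst : Q
  lab : A
  guard : CC
  reset : Bool

/-- A one-clock timed automaton. -/
structure TA (A : Type) where
  Q : Type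
  init : Q
  final : Set Q
  trans : Set (TTrans Q A)

/-- The automaton has finitely many states and transitions. -/
def TA.IsFinite {A : Type} (M : TA A) : Prop := Finite M.Q ∧ M.trans.Finite

/-- Runs of a one-clock timed automaton between configurations. -/
inductive Steps {A : Type} (M : TA A) : M.Q × ℝ≥0 → TimedWord A → M.Q × ℝ≥0 → Prop
  | nil (c : M.Q × ℝ≥0) : Steps M c [] c
  | cons {q : M.Q} {ν t : ℝ≥0} {a : A} {w : TimedWord A} {c : M.Q × ℝ≥0}
      (θ : TTrans M.Q A) (hθ : θ ∈ M.trans) (hsrc : θ.src = q) (hlab : θ.lab = a)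
      (hg : θ.guard.sat (ν + t))
      (hrest : Steps M (θ.dst, if θ.reset then 0 else ν + t) w c) :
      Steps M (q, ν) ((t, a) :: w) c

/-- The language of `M` from a given configuration. -/
def TA.LangFrom {A : Type} (M : TA A) (c : M.Q × ℝ≥0) : Set (TimedWord A) :=
  {w | ∃ q' : M.Q, ∃ ν' : ℝ≥0, Steps M c w (q', ν') ∧ q' ∈ M.final}

/-- The language of `M` (from the initial configuration). -/
def TA.Lang {A : Type} (M : TA A) : Set (TimedWord A) := M.LangFrom (M.init, 0)

/-- Determinism: distinct transitions with the same source and letter have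
disjoint guards. -/
def TA.Deterministic {A : Type} (M : TA A) : Prop :=
  ∀ θ₁ ∈ M.trans, ∀ θ₂ ∈ M.trans, θ₁ ≠ θ₂ → θ₁.src = θ₂.src → θ₁.lab = θ₂.lab →
    ∀ x : ℝ≥0, ¬ (θ₁.guard.sat x ∧ θ₂.guard.sat x)

/-- Completeness: every timed word admits a run from the initial configuration. -/
def TA.Complete {A : Type} (M : TA A) : Prop :=
  ∀ w : TimedWord A, ∃ c : M.Q × ℝ≥0, Steps M (M.init, 0) w c

/-- A 1-IRTA: every resetting transition has an equality guard. -/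
def TA.IsIRTA {A : Type} (M : TA A) : Prop :=
  ∀ θ ∈ M.trans, θ.reset = true → ∃ m : ℕ, θ.guard = CC.eq m

/-- Guards allowed in a strict 1-IRTA with constant `K`. -/
def StrictGuard (K : ℕ) (φ : CC) : Prop :=
  (∃ m : ℕ, φ = CC.eq m) ∨ (∃ m : ℕ, φ = CC.and (CC.gt m) (CC.lt (m + 1))) ∨ φ = CC.gt K

/-- Strictness with constant `K`: every guard is of one of the allowed forms
and a guard is an equality iff the transition resets. -/
def TA.IsStrict {A : Type} (M : TA A) (K : ℕ) : Prop :=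
  ∀ θ ∈ M.trans, StrictGuard K θ.guard ∧ ((∃ m : ℕ, θ.guard = CC.eq m) ↔ θ.reset = true)

/-- All constants appearing in guards are at most `K`. -/
def TA.MaxConstLE {A : Type} (M : TA A) (K : ℕ) : Prop :=
  ∀ θ ∈ M.trans, θ.guard.maxConst ≤ K

/-- `M` reaches the same control state on reading `u` and `v` from the initial
configuration. -/
def TA.SameState {A : Type} (M : TA A) (u v : TimedWord A) : Prop :=
  ∃ q : M.Q, ∃ ν ν' : ℝ≥0, Steps M (M.init, 0) u (q, ν) ∧ Steps M (M.init, 0) v (q, ν')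

/-- A `K`-acceptor. -/
def IsKAcceptor {A : Type} (M : TA A) (K : ℕ) : Prop :=
  M.IsFinite ∧ M.Complete ∧ M.Deterministic ∧ M.IsIRTA ∧ M.IsStrict K ∧ M.MaxConstLE K ∧
    ∀ u v : TimedWord A, M.SameState u v → RegEq K (cKW K u) (cKW K v)

/-! ### Equivalences on timed words -/

/-- `L`-preservation of a relation on timed words. -/
def LPreserving {A : Type} (L : Set (TimedWord A)) (r : TimedWord A → TimedWord A → Prop) :
    Prop :=
  ∀ u v : TimedWord A, r u v → (u ∈ L ↔ v ∈ L)

/-- `K`-monotonicity of a relation on timed words. -/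
def KMonotonic {A : Type} (K : ℕ) (r : TimedWord A → TimedWord A → Prop) : Prop :=
  ∀ u v : TimedWord A, r u v →
    RegEq K (cKW K u) (cKW K v) ∧
      ∀ (a : A) (t t' : ℝ≥0), RegEq K (cKW K u + t) (cKW K v + t') →
        r (u ++ [(t, a)]) (v ++ [(t', a)])

/-- Finite index: there are finitely many classes `{v | r u v}`. -/
def FiniteIndex {A : Type} (r : TimedWord A → TimedWord A → Prop) : Prop :=
  Set.Finite (Set.range fun u : TimedWord A => {v : TimedWord A | r u v})

/-! ### The rescaling maps -/

/-- The bijection `f_{λ→λ'}` of the open unit interval. -/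
noncomputable def fScale (lam lam' t : ℝ≥0) : ℝ≥0 :=
  if t ≤ lam then (lam' / lam) * t else lam' + ((1 - lam') / (1 - lam)) * (t - lam)

/-- The new delay `t'` computed from the current clock values `y, y'` and delay `t`. -/
noncomputable def tauStep (K : ℕ) (y y' t : ℝ≥0) : ℝ≥0 :=
  if (IsNatVal y ∧ IsNatVal y') ∨ ((K : ℝ≥0) < y ∧ (K : ℝ≥0) < y') then t
  else (⌊t⌋₊ : ℝ≥0) + fScale (1 - fracPart y) (1 - fracPart y') (fracPart t)

/-- Auxiliary rescaling map on timestamps, carrying the current clock values. -/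
noncomputable def tauAux (K : ℕ) : ℝ≥0 → ℝ≥0 → Timestamp → Timestamp
  | _, _, [] => []
  | y, y', t :: d =>
      tauStep K y y' t ::
        tauAux K (resetStep K (y + t)) (resetStep K (y' + tauStep K y y' t)) d

/-- The rescaling map `τ_{x→x'}` on timestamps. -/
noncomputable def tau (K : ℕ) (x x' : ℝ≥0) (d : Timestamp) : Timestamp :=
  tauAux K (resetStep K x) (resetStep K x') d

/-- Auxiliary rescaling map on timed words. -/
noncomputable def tauWAux {A : Type} (K : ℕ) : ℝ≥0 → ℝ≥0 → TimedWord A → TimedWord A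
  | _, _, [] => []
  | y, y', (t, a) :: w =>
      (tauStep K y y' t, a) ::
        tauWAux K (resetStep K (y + t)) (resetStep K (y' + tauStep K y y' t)) w

/-- The rescaling map `τ_{x→x'}` on timed words. -/
noncomputable def tauW {A : Type} (K : ℕ) (x x' : ℝ≥0) (w : TimedWord A) : TimedWord A :=
  tauWAux K (resetStep K x) (resetStep K x') w

/-! ### Residuals and the syntactic equivalence -/

/-- The residual language `u^{-1}L`. -/
def residual {A : Type} (L : Set (TimedWord A)) (u : TimedWord A) : Set (TimedWord A) :=
  {w : TimedWord A | u ++ w ∈ L}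

/-- The syntactic equivalence `≈^{L,K}`. -/
def ApproxLK {A : Type} (L : Set (TimedWord A)) (K : ℕ) (u v : TimedWord A) : Prop :=
  RegEq K (cKW K u) (cKW K v) ∧
    (tauW K (cKW K u) (cKW K v)) '' (residual L u) = residual L v

/-! ### The automaton built from a monotonic equivalence -/

/-- The region guard `φ([t])`. -/
noncomputable def phiOf (K : ℕ) (t : ℝ≥0) : CC :=
  if t ≤ (K : ℝ≥0) then
    (if IsNatVal t then CC.eq ⌊t⌋₊ else CC.and (CC.gt ⌊t⌋₊) (CC.lt (⌊t⌋₊ + 1)))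
  else CC.gt K

/-- The automaton `A_≈` built from an equivalence `s` on timed words. -/
noncomputable def Aapprox {A : Type} (L : Set (TimedWord A)) (K : ℕ)
    (s : Setoid (TimedWord A)) : TA A where
  Q := Quotient s
  init := Quotient.mk s ([] : TimedWord A)
  final := {q : Quotient s | ∃ u : TimedWord A, q = Quotient.mk s u ∧ u ∈ L}
  trans := {θ : TTrans (Quotient s) A |
    ∃ (u : TimedWord A) (a : A) (t : ℝ≥0),
      θ.src = Quotient.mk s u ∧ θ.dst = Quotient.mk s (u ++ [(t, a)]) ∧ θ.lab = a ∧
      θ.guard = phiOf K (cKW K u + t) ∧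
      (θ.reset = true ↔ ∃ m : ℕ, m ≤ K ∧ cKW K u + t = (m : ℝ≥0))}

/-! ### Half-integral and small words -/

/-- Every delay has fractional part `0` or `1/2`. -/
def HalfIntegral {A : Type} (w : TimedWord A) : Prop :=
  ∀ p ∈ w, fracPart p.1 = 0 ∨ fracPart p.1 = 1 / 2

/-- Every delay is `< K + 1`. -/
def SmallWord {A : Type} (K : ℕ) (w : TimedWord A) : Prop :=
  ∀ p ∈ w, p.1 < (K : ℝ≥0) + 1

/-- The delays of `Σ_K`: half-integral values `≤ K + 1/2`. -/
def IsSigmaK (K : ℕ) (t : ℝ≥0) : Prop :=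
  (fracPart t = 0 ∨ fracPart t = 1 / 2) ∧ t ≤ (K : ℝ≥0) + 1 / 2

/-- Words over `Σ_K` (small half-integral words). -/
def SigmaWord {A : Type} (K : ℕ) (w : TimedWord A) : Prop :=
  ∀ p ∈ w, IsSigmaK K p.1



/-! ### `K`-acceptors with their region representatives -/

/-- A `K`-acceptor bundled with the half-integral representative of the
unique region of each state. -/
structure KAcc (A : Type) (K : ℕ) where
  M : TA A
  acc : IsKAcceptor M K
  reg : M.Q → ℝ≥0
  regHalf : ∀ q : M.Q, fracPart (reg q) = 0 ∨ fracPart (reg q) = 1 / 2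
  regLe : ∀ q : M.Q, reg q ≤ (K : ℝ≥0) + 1 / 2
  regSpec : ∀ (w : TimedWord A) (q : M.Q) (x : ℝ≥0),
    Steps M (M.init, 0) w (q, x) → RegEq K x (reg q)

/-- The minimization equivalences `∼^i` on the states of a `K`-acceptor. -/
def simEq {A : Type} {K : ℕ} (B : KAcc A K) : ℕ → B.M.Q → B.M.Q → Prop
  | 0, p, q => B.reg p = B.reg q ∧ (p ∈ B.M.final ↔ q ∈ B.M.final)
  | i + 1, p, q => simEq B i p q ∧
      ∀ (t : ℝ≥0) (a : A), IsSigmaK K t →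
        ∀ θ₁ θ₂ : TTrans B.M.Q A, θ₁ ∈ B.M.trans → θ₂ ∈ B.M.trans →
          θ₁.src = p → θ₂.src = q → θ₁.lab = a → θ₂.lab = a →
          θ₁.guard = phiOf K t → θ₂.guard = phiOf K t →
          simEq B i θ₁.dst θ₂.dst

/-- The quotient automaton `B/∼^m`. -/
noncomputable def quotTA {A : Type} {K : ℕ} (B : KAcc A K) (m : ℕ) : TA A where
  Q := Quot (simEq B m)
  init := Quot.mk (simEq B m) B.M.init
  final := {c : Quot (simEq B m) | ∃ q ∈ B.M.final, c = Quot.mk (simEq B m) q}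
  trans := {θ : TTrans (Quot (simEq B m)) A |
    ∃ θ₀ ∈ B.M.trans,
      θ.src = Quot.mk (simEq B m) θ₀.src ∧ θ.dst = Quot.mk (simEq B m) θ₀.dst ∧
      θ.lab = θ₀.lab ∧ θ.guard = θ₀.guard ∧ θ.reset = θ₀.reset}

/-! ### Observation tables -/

/-- An observation table over `Σ_K`. -/
structure ObsTable (A : Type) (K : ℕ) where
  U1 : Set (TimedWord A)
  E : Set (TimedWord A)
  val : TimedWord A → TimedWord A → Bool
  U1fin : U1.Finite
  Efin : E.Finite
  U1sigma : ∀ u ∈ U1, SigmaWord K u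
  Esigma : ∀ e ∈ E, SigmaWord K e
  epsU1 : ([] : TimedWord A) ∈ U1
  prefixClosed : ∀ (u : TimedWord A) (x : ℝ≥0 × A), u ++ [x] ∈ U1 → u ∈ U1
  epsE : ([] : TimedWord A) ∈ E
  suffixClosed : ∀ (x : ℝ≥0 × A) (e : TimedWord A), x :: e ∈ E → e ∈ E

/-- The set `U2` of one-letter `Σ_K`-extensions of `U1`. -/
def obsU2 {A : Type} {K : ℕ} (T : ObsTable A K) : Set (TimedWord A) :=
  {w : TimedWord A | ∃ u ∈ T.U1, ∃ (t : ℝ≥0) (a : A), IsSigmaK K t ∧ w = u ++ [(t, a)]}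

/-- `R(u)`: the row of `u` (restricted to `E`) together with `c^K_⊤(u)`. -/
noncomputable def Rof {A : Type} {K : ℕ} (T : ObsTable A K) (u : TimedWord A) :
    ({e : TimedWord A // e ∈ T.E} → Bool) × WithTop ℝ≥0 :=
  (fun e => T.val u e.1, cKTop K u)

/-- The table is closed. -/
def ObsTable.Closed {A : Type} {K : ℕ} (T : ObsTable A K) : Prop :=
  ∀ w ∈ obsU2 T, ∃ u ∈ T.U1, Rof T w = Rof T u

/-- The table is consistent. -/
def ObsTable.Consistent {A : Type} {K : ℕ} (T : ObsTable A K) : Prop :=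
  ∀ u ∈ T.U1, ∀ w ∈ T.U1, Rof T u = Rof T w →
    ∀ (t : ℝ≥0) (a : A), IsSigmaK K t → Rof T (u ++ [(t, a)]) = Rof T (w ++ [(t, a)])

/-- The automaton `A_𝒯` induced by a (closed and consistent) observation table. -/
noncomputable def ATable {A : Type} {K : ℕ} (T : ObsTable A K) : TA A where
  Q := {f : ({e : TimedWord A // e ∈ T.E} → Bool) × WithTop ℝ≥0 // ∃ u ∈ T.U1, f = Rof T u}
  init := ⟨Rof T [], ⟨[], T.epsU1, rfl⟩⟩
  final := {q | ∃ u ∈ T.U1, q.1 = Rof T u ∧ T.val u [] = true}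
  trans := {θ | ∃ u ∈ T.U1, ∃ (t : ℝ≥0) (a : A), IsSigmaK K t ∧
      θ.src.1 = Rof T u ∧ θ.dst.1 = Rof T (u ++ [(t, a)]) ∧ θ.lab = a ∧
      θ.guard = phiOf K (cKW K u + t) ∧
      (θ.reset = true ↔ ∃ m : ℕ, m ≤ K ∧ cKW K u + t = (m : ℝ≥0))}

/-- A `K`-acceptor is consistent with the observation table `𝒯`. -/
def ConsistentWith {A : Type} {K : ℕ} (M : TA A) (T : ObsTable A K) : Prop :=
  ∀ w : TimedWord A, (w ∈ T.U1 ∨ w ∈ obsU2 T) → ∀ e ∈ T.E,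
    ∀ (q : M.Q) (ν : ℝ≥0), Steps M (M.init, 0) (w ++ e) (q, ν) →
      (q ∈ M.final ↔ T.val w e = true)

/-- Isomorphism of one-clock timed automata. -/
structure TAIso {A : Type} (M N : TA A) where
  toEquiv : M.Q ≃ N.Q
  init_eq : toEquiv M.init = N.init
  final_iff : ∀ q : M.Q, q ∈ M.final ↔ toEquiv q ∈ N.final
  trans_iff : ∀ θ : TTrans M.Q A,
    θ ∈ M.trans ↔
      (⟨toEquiv θ.src, toEquiv θ.dst, θ.lab, θ.guard, θ.reset⟩ : TTrans N.Q A) ∈ N.trans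


/-! ### Auxiliary lemmas for Statement 5 -/

lemma floor_add_frac (x : ℝ≥0) : (⌊x⌋₊ : ℝ≥0) + fracPart x = x :=
  add_tsub_cancel_of_le (Nat.floor_le zero_le)

lemma fracPart_lt_one (x : ℝ≥0) : fracPart x < 1 := by
  have h := Nat.lt_floor_add_one x
  have hle : (⌊x⌋₊ : ℝ≥0) ≤ x := Nat.floor_le zero_le
  unfold fracPart
  rw [tsub_lt_iff_left hle]
  exact h

lemma floor_natCast_add {s : ℝ≥0} (N : ℕ) (hs : s < 1) : ⌊(N : ℝ≥0) + s⌋₊ = N := by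
  rw [Nat.floor_eq_iff zero_le]
  constructor
  · exact le_self_add
  · push_cast
    exact add_lt_add_right hs _

lemma fracPart_natCast_add {s : ℝ≥0} (N : ℕ) (hs : s < 1) :
    fracPart ((N : ℝ≥0) + s) = s := by
  unfold fracPart
  rw [floor_natCast_add N hs, add_tsub_cancel_left]

lemma fracPart_eq_zero_iff (x : ℝ≥0) : fracPart x = 0 ↔ IsNatVal x := by
  constructor
  · intro h0
    have hle : (⌊x⌋₊ : ℝ≥0) ≤ x := Nat.floor_le zero_le
    have : x ≤ (⌊x⌋₊ : ℝ≥0) := tsub_eq_zero_iff_le.mp h0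
    exact ⟨⌊x⌋₊, le_antisymm this hle⟩
  · rintro ⟨m, rfl⟩
    unfold fracPart
    rw [Nat.floor_natCast, tsub_self]

lemma regEq_refl (K : ℕ) (x : ℝ≥0) : RegEq K x x := Or.inl ⟨rfl, Iff.rfl⟩

lemma regEq_symm (K : ℕ) {x y : ℝ≥0} (h : RegEq K x y) : RegEq K y x := by
  rcases h with ⟨h1, h2⟩ | ⟨h1, h2⟩
  · exact Or.inl ⟨h1.symm, h2.symm⟩
  · exact Or.inr ⟨h2, h1⟩

lemma regEq_of_add (K N : ℕ) {r r' : ℝ≥0} (hr : r < 1) (hr' : r' < 1)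
    (h0 : r = 0 ↔ r' = 0) : RegEq K ((N : ℝ≥0) + r) ((N : ℝ≥0) + r') :=
  Or.inl ⟨by rw [floor_natCast_add N hr, floor_natCast_add N hr'],
          by rw [fracPart_natCast_add N hr, fracPart_natCast_add N hr']; exact h0⟩

lemma resetStep_regEq (K : ℕ) {a a' : ℝ≥0} (h : RegEq K a a') :
    RegEq K (resetStep K a) (resetStep K a') := by
  have key : ∀ b b' : ℝ≥0, RegEq K b b' → (∃ m : ℕ, m ≤ K ∧ b = (m : ℝ≥0)) →
      (∃ m : ℕ, m ≤ K ∧ b' = (m : ℝ≥0)) := by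
    rintro b b' hb ⟨m, hm, rfl⟩
    rcases hb with ⟨hfl, hfr⟩ | ⟨hk, hk'⟩
    · refine ⟨m, hm, ?_⟩
      have h0 : fracPart b' = 0 := hfr.mp ((fracPart_eq_zero_iff _).mpr ⟨m, rfl⟩)
      obtain ⟨m', rfl⟩ := (fracPart_eq_zero_iff _).mp h0
      have : m = m' := by simpa using hfl
      rw [this]
    · exact absurd hk (not_lt.mpr (by exact_mod_cast Nat.cast_le.mpr hm))
  have hiff : (∃ m : ℕ, m ≤ K ∧ a = (m : ℝ≥0)) ↔ (∃ m : ℕ, m ≤ K ∧ a' = (m : ℝ≥0)) :=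
    ⟨key a a' h, key a' a (regEq_symm K h)⟩
  unfold resetStep
  by_cases hcond : ∃ m : ℕ, m ≤ K ∧ a = (m : ℝ≥0)
  · rw [if_pos hcond, if_pos (hiff.mp hcond)]
    exact regEq_refl K 0
  · rw [if_neg hcond, if_neg (fun hh => hcond (hiff.mpr hh))]
    exact h

section fScaleLemmas

variable {lam lam' s : ℝ≥0} (h1 : 0 < lam) (h2 : lam < 1) (h3 : 0 < lam') (h4 : lam' < 1)

lemma fScale_eq_le (hs : s ≤ lam) : fScale lam lam' s = lam' / lam * s := by
  rw [fScale, if_pos hs]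

lemma fScale_eq_gt (hs : lam < s) :
    fScale lam lam' s = lam' + (1 - lam') / (1 - lam) * (s - lam) := by
  rw [fScale, if_neg (not_le.mpr hs)]

include h1 h3 in
lemma fScale_self : fScale lam lam' lam = lam' := by
  rw [fScale, if_pos le_rfl, div_mul_cancel₀ _ h1.ne']

include h1 h3 in
lemma fScale_lt_lt (h : s < lam) : fScale lam lam' s < lam' := by
  rw [fScale, if_pos h.le]
  calc lam' / lam * s < lam' / lam * lam := by
        exact mul_lt_mul_of_pos_left h (div_pos h3 h1)
    _ = lam' := div_mul_cancel₀ _ h1.ne'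

include h2 h4 in
lemma fScale_gt_gt (h : lam < s) : lam' < fScale lam lam' s := by
  rw [fScale, if_neg (not_le.mpr h)]
  exact lt_add_of_pos_right _
    (mul_pos (div_pos (tsub_pos_of_lt h4) (tsub_pos_of_lt h2)) (tsub_pos_of_lt h))

include h1 h2 h4 in
lemma fScale_lt_one (hs : s < 1) : fScale lam lam' s < 1 := by
  rcases le_or_gt s lam with hle | hlt
  · rw [fScale, if_pos hle]
    calc lam' / lam * s ≤ lam' / lam * lam := mul_le_mul_right hle _
      _ = lam' := div_mul_cancel₀ _ h1.ne'
      _ < 1 := h4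
  · rw [fScale, if_neg (not_le.mpr hlt)]
    have hd : (0 : ℝ≥0) < (1 - lam') / (1 - lam) :=
      div_pos (tsub_pos_of_lt h4) (tsub_pos_of_lt h2)
    calc lam' + (1 - lam') / (1 - lam) * (s - lam)
        < lam' + (1 - lam') / (1 - lam) * (1 - lam) := by
          exact add_lt_add_right
            (mul_lt_mul_of_pos_left (tsub_lt_tsub_right_of_le hlt.le hs) hd) _
      _ = lam' + (1 - lam') := by rw [div_mul_cancel₀ _ (tsub_pos_of_lt h2).ne']
      _ = 1 := add_tsub_cancel_of_le h4.le

include h1 h2 h3 h4 in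
lemma fScale_inv : fScale lam' lam (fScale lam lam' s) = s := by
  rcases le_or_gt s lam with hle | hlt
  · rw [fScale_eq_le hle]
    have hv : lam' / lam * s ≤ lam' := by
      calc lam' / lam * s ≤ lam' / lam * lam := mul_le_mul_right hle _
        _ = lam' := div_mul_cancel₀ _ h1.ne'
    rw [fScale_eq_le hv, ← mul_assoc, div_mul_div_comm, mul_comm lam' lam,
      div_self (mul_ne_zero h1.ne' h3.ne'), one_mul]
  · rw [fScale_eq_gt hlt]
    have hcpos : (0 : ℝ≥0) < (1 - lam') / (1 - lam) :=
      div_pos (tsub_pos_of_lt h4) (tsub_pos_of_lt h2)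
    have hv : lam' < lam' + (1 - lam') / (1 - lam) * (s - lam) :=
      lt_add_of_pos_right _ (mul_pos hcpos (tsub_pos_of_lt hlt))
    rw [fScale_eq_gt hv, add_tsub_cancel_left, ← mul_assoc,
      div_mul_div_comm, mul_comm (1 - lam') (1 - lam),
      div_self (mul_ne_zero (tsub_pos_of_lt h2).ne' (tsub_pos_of_lt h4).ne'), one_mul,
      add_tsub_cancel_of_le hlt.le]

end fScaleLemmas

lemma tauStep_pos {K : ℕ} {y y' t : ℝ≥0}
    (h : (IsNatVal y ∧ IsNatVal y') ∨ ((K : ℝ≥0) < y ∧ (K : ℝ≥0) < y')) :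
    tauStep K y y' t = t := by
  rw [tauStep, if_pos h]

lemma tauStep_neg {K : ℕ} {y y' t : ℝ≥0}
    (h : ¬ ((IsNatVal y ∧ IsNatVal y') ∨ ((K : ℝ≥0) < y ∧ (K : ℝ≥0) < y'))) :
    tauStep K y y' t =
      (⌊t⌋₊ : ℝ≥0) + fScale (1 - fracPart y) (1 - fracPart y') (fracPart t) := by
  rw [tauStep, if_neg h]

lemma tauStep_key (K : ℕ) (y y' t : ℝ≥0) (h : RegEq K y y') :
    tauStep K y' y (tauStep K y y' t) = t ∧ RegEq K (y + t) (y' + tauStep K y y' t) := by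
  by_cases hc : (IsNatVal y ∧ IsNatVal y') ∨ ((K : ℝ≥0) < y ∧ (K : ℝ≥0) < y')
  · have hc' : (IsNatVal y' ∧ IsNatVal y) ∨ ((K : ℝ≥0) < y' ∧ (K : ℝ≥0) < y) := by tauto
    rw [tauStep_pos hc, tauStep_pos hc']
    refine ⟨rfl, ?_⟩
    rcases hc with ⟨hn, hn'⟩ | ⟨hk, hk'⟩
    · rcases h with ⟨hfl, _⟩ | ⟨hk, hk'⟩
      · obtain ⟨m, rfl⟩ := hn
        obtain ⟨m', rfl⟩ := hn'
        have hmm : m = m' := by simpa using hfl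
        subst hmm
        exact regEq_refl K _
      · exact Or.inr ⟨lt_of_lt_of_le hk le_self_add, lt_of_lt_of_le hk' le_self_add⟩
    · exact Or.inr ⟨lt_of_lt_of_le hk le_self_add, lt_of_lt_of_le hk' le_self_add⟩
  · have hc' : ¬ ((IsNatVal y' ∧ IsNatVal y) ∨ ((K : ℝ≥0) < y' ∧ (K : ℝ≥0) < y)) := by
      tauto
    obtain ⟨hfl, hfr⟩ : ⌊y⌋₊ = ⌊y'⌋₊ ∧ (fracPart y = 0 ↔ fracPart y' = 0) := by
      rcases h with h | h
      · exact h
      · exact absurd (Or.inr h) hc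
    have ha : fracPart y ≠ 0 := fun h0 =>
      hc (Or.inl ⟨(fracPart_eq_zero_iff y).mp h0, (fracPart_eq_zero_iff y').mp (hfr.mp h0)⟩)
    have hb : fracPart y' ≠ 0 := fun h0 =>
      hc (Or.inl ⟨(fracPart_eq_zero_iff y).mp (hfr.mpr h0), (fracPart_eq_zero_iff y').mp h0⟩)
    have hapos : 0 < fracPart y := pos_iff_ne_zero.mpr ha
    have hbpos : 0 < fracPart y' := pos_iff_ne_zero.mpr hb
    have ha1 : fracPart y < 1 := fracPart_lt_one y
    have hb1 : fracPart y' < 1 := fracPart_lt_one y'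
    have hlam0 : 0 < 1 - fracPart y := tsub_pos_of_lt ha1
    have hlam1 : 1 - fracPart y < 1 := tsub_lt_self one_pos hapos
    have hlam'0 : 0 < 1 - fracPart y' := tsub_pos_of_lt hb1
    have hlam'1 : 1 - fracPart y' < 1 := tsub_lt_self one_pos hbpos
    have hs1 : fracPart t < 1 := fracPart_lt_one t
    rw [tauStep_neg hc]
    set s' := fScale (1 - fracPart y) (1 - fracPart y') (fracPart t) with hs'def
    have hs'1 : s' < 1 := fScale_lt_one hlam0 hlam1 hlam'1 hs1
    have hfloor' : ⌊(⌊t⌋₊ : ℝ≥0) + s'⌋₊ = ⌊t⌋₊ := floor_natCast_add _ hs'1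
    have hfrac' : fracPart ((⌊t⌋₊ : ℝ≥0) + s') = s' := fracPart_natCast_add _ hs'1
    constructor
    · rw [tauStep_neg hc', hfloor', hfrac', hs'def,
        fScale_inv hlam0 hlam1 hlam'0 hlam'1, floor_add_frac t]
    · have hy : y = (⌊y⌋₊ : ℝ≥0) + fracPart y := (floor_add_frac y).symm
      have hy' : y' = (⌊y⌋₊ : ℝ≥0) + fracPart y' := by
        rw [hfl]; exact (floor_add_frac y').symm
      have ht : t = (⌊t⌋₊ : ℝ≥0) + fracPart t := (floor_add_frac t).symm
      have hA : (1 - fracPart y) + fracPart y = 1 := tsub_add_cancel_of_le ha1.le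
      have hB : (1 - fracPart y') + fracPart y' = 1 := tsub_add_cancel_of_le hb1.le
      rcases lt_trichotomy (fracPart t) (1 - fracPart y) with hsl | hsl | hsl
      · have hs'l : s' < 1 - fracPart y' := fScale_lt_lt hlam0 hlam'0 hsl
        have hcast1 : ((⌊y⌋₊ + ⌊t⌋₊ : ℕ) : ℝ≥0) = (⌊y⌋₊ : ℝ≥0) + (⌊t⌋₊ : ℝ≥0) := by
          push_cast; ring
        have e1 : y + t = ((⌊y⌋₊ + ⌊t⌋₊ : ℕ) : ℝ≥0) + (fracPart y + fracPart t) := by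
          rw [hcast1]
          conv_lhs => rw [hy, ht]
          ring
        have e2 : y' + ((⌊t⌋₊ : ℝ≥0) + s') =
            ((⌊y⌋₊ + ⌊t⌋₊ : ℕ) : ℝ≥0) + (fracPart y' + s') := by
          rw [hcast1]
          conv_lhs => rw [hy']
          ring
        rw [e1, e2]
        refine regEq_of_add K _ ?_ ?_ ?_
        · calc fracPart y + fracPart t < fracPart y + (1 - fracPart y) := by
                exact add_lt_add_right hsl _
            _ = 1 := by rw [add_comm]; exact hA
        · calc fracPart y' + s' < fracPart y' + (1 - fracPart y') := by
                exact add_lt_add_right hs'l _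
            _ = 1 := by rw [add_comm]; exact hB
        · constructor
          · intro hz; exact absurd hz (by positivity)
          · intro hz; exact absurd hz (by positivity)
      · have hs'l : s' = 1 - fracPart y' := by
          rw [hs'def, ← hsl]
          rw [hsl]
          exact fScale_self hlam0 hlam'0
        have heq : y + t = y' + ((⌊t⌋₊ : ℝ≥0) + s') := by
          conv_lhs => rw [hy, ht, hsl]
          conv_rhs => rw [hy', hs'l]
          calc (⌊y⌋₊ : ℝ≥0) + fracPart y + ((⌊t⌋₊ : ℝ≥0) + (1 - fracPart y))
              = ((⌊y⌋₊ : ℝ≥0) + (⌊t⌋₊ : ℝ≥0)) + ((1 - fracPart y) + fracPart y) := by ring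
            _ = ((⌊y⌋₊ : ℝ≥0) + (⌊t⌋₊ : ℝ≥0)) + 1 := by rw [hA]
            _ = ((⌊y⌋₊ : ℝ≥0) + (⌊t⌋₊ : ℝ≥0)) + ((1 - fracPart y') + fracPart y') := by
                rw [hB]
            _ = (⌊y⌋₊ : ℝ≥0) + fracPart y' + ((⌊t⌋₊ : ℝ≥0) + (1 - fracPart y')) := by ring
        rw [← heq]
        exact regEq_refl K _
      · have hs'l : 1 - fracPart y' < s' :=
          fScale_gt_gt hlam1 hlam'1 hsl
        have hu : (1 - fracPart y) + (fracPart t - (1 - fracPart y)) = fracPart t :=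
          add_tsub_cancel_of_le hsl.le
        have hu' : (1 - fracPart y') + (s' - (1 - fracPart y')) = s' :=
          add_tsub_cancel_of_le hs'l.le
        have hult : fracPart t - (1 - fracPart y) < 1 :=
          lt_of_le_of_lt tsub_le_self hs1
        have hu'lt : s' - (1 - fracPart y') < 1 :=
          lt_of_le_of_lt tsub_le_self hs'1
        have hcast3 : ((⌊y⌋₊ + ⌊t⌋₊ + 1 : ℕ) : ℝ≥0) =
            (⌊y⌋₊ : ℝ≥0) + (⌊t⌋₊ : ℝ≥0) + ((1 - fracPart y) + fracPart y) := by
          rw [hA]; push_cast; ring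
        have hcast3' : ((⌊y⌋₊ + ⌊t⌋₊ + 1 : ℕ) : ℝ≥0) =
            (⌊y⌋₊ : ℝ≥0) + (⌊t⌋₊ : ℝ≥0) + ((1 - fracPart y') + fracPart y') := by
          rw [hB]; push_cast; ring
        have e1 : y + t = ((⌊y⌋₊ + ⌊t⌋₊ + 1 : ℕ) : ℝ≥0) + (fracPart t - (1 - fracPart y)) := by
          rw [hcast3]
          conv_lhs => rw [hy, ht, ← hu]
          ring
        have e2 : y' + ((⌊t⌋₊ : ℝ≥0) + s') =
            ((⌊y⌋₊ + ⌊t⌋₊ + 1 : ℕ) : ℝ≥0) + (s' - (1 - fracPart y')) := by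
          rw [hcast3']
          conv_lhs => rw [hy', ← hu']
          ring
        rw [e1, e2]
        refine regEq_of_add K _ hult hu'lt ?_
        constructor
        · intro hz; exact absurd hz (tsub_pos_of_lt hsl).ne'
        · intro hz; exact absurd hz (tsub_pos_of_lt hs'l).ne'

lemma tauAux_inv (K : ℕ) : ∀ (d : Timestamp) (y y' : ℝ≥0), RegEq K y y' →
    tauAux K y' y (tauAux K y y' d) = d
  | [], _, _, _ => rfl
  | t :: d, y, y', h => by
      obtain ⟨h1, h2⟩ := tauStep_key K y y' t h
      simp only [tauAux, h1]
      rw [tauAux_inv K d _ _ (resetStep_regEq K h2)]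

/-- `τ_{x→x'}` is a bijection with inverse `τ_{x'→x}`. -/
theorem statement5 (K : ℕ) (x x' : ℝ≥0) (h : RegEq K x x') :
    Function.Bijective (tau K x x') ∧
      Function.LeftInverse (tau K x' x) (tau K x x') ∧
      Function.RightInverse (tau K x' x) (tau K x x') := by
  have h1 : RegEq K (resetStep K x) (resetStep K x') := resetStep_regEq K h
  have h2 : RegEq K (resetStep K x') (resetStep K x) := regEq_symm K h1
  have L : Function.LeftInverse (tau K x' x) (tau K x x') := fun d =>
    tauAux_inv K d _ _ h1
  have R : Function.RightInverse (tau K x' x) (tau K x x') := fun d =>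
    tauAux_inv K d _ _ h2
  exact ⟨⟨L.injective, R.surjective⟩, L, R⟩

end IRTA
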